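/- For every integer k ≥ 1, the group G_k with presentation ⟨x, y | x y x⁻¹ = y⁻¹, x² = y^k⟩ has order 4k. -/

import Mathlib

/-- The relations of the generalised quaternion group `Q_{4k}`:
`x y x⁻¹ y` and `x² y^{-k}`, where `x = FreeGroup.of 0` and `y = FreeGroup.of 1`. -/
def quaternionRels (k : ℕ) : Set (FreeGroup (Fin 2)) :=
  {FreeGroup.of 0 * FreeGroup.of 1 * (FreeGroup.of 0)⁻¹ * FreeGroup.of 1,
   FreeGroup.of 0 ^ 2 * FreeGroup.of 1 ^ (-(k : ℤ))}

namespace QuatAux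

open QuaternionGroup

instance inst2k (k : ℕ) [NeZero k] : NeZero (2 * k) := ⟨by have := NeZero.ne k; omega⟩

variable (k : ℕ)

/-- the target generators -/
def f : Fin 2 → QuaternionGroup k := ![xa 0, a 1]

lemma two_k_cast : ((2 * k : ℕ) : ZMod (2 * k)) = 0 := ZMod.natCast_self _

lemma rels_hold (r : FreeGroup (Fin 2)) (hr : r ∈ quaternionRels k) :
    FreeGroup.lift (f k) r = 1 := by
  have h2k : ((2 * k : ℕ) : ZMod (2 * k)) = 0 := ZMod.natCast_self _
  push_cast at h2k
  have hinv : (xa 0 : QuaternionGroup k)⁻¹ = xa (k : ZMod (2 * k)) := by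
    rw [inv_eq_iff_mul_eq_one, xa_mul_xa, one_def]
    congr 1
    rw [sub_zero]
    linear_combination h2k
  rcases hr with rfl | rfl
  · simp only [map_mul, map_inv, FreeGroup.lift_apply_of, f, Matrix.cons_val_zero,
      Matrix.cons_val_one, Matrix.head_cons, hinv, xa_mul_a, a_mul_xa, xa_mul_xa, a_mul_a,
      one_def]
    congr 1
    linear_combination h2k
  · rw [map_mul, map_pow, map_zpow]
    simp only [FreeGroup.lift_apply_of, f, Matrix.cons_val_zero, Matrix.cons_val_one,
      Matrix.head_cons, xa_sq, zpow_neg, zpow_natCast, a_one_pow, mul_inv_cancel]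

/-- The homomorphism from the presented group to `QuaternionGroup k`. -/
noncomputable def φ : PresentedGroup (quaternionRels k) →* QuaternionGroup k :=
  PresentedGroup.toGroup (rels_hold k)

section Pside

variable {k}

local notation "P" => PresentedGroup (quaternionRels k)

noncomputable def X : PresentedGroup (quaternionRels k) := PresentedGroup.of 0
noncomputable def Y : PresentedGroup (quaternionRels k) := PresentedGroup.of 1

lemma mk_rel (r : FreeGroup (Fin 2)) (hr : r ∈ quaternionRels k) :
    PresentedGroup.mk (quaternionRels k) r = 1 :=
  (QuotientGroup.eq_one_iff r).2 (Subgroup.subset_normalClosure hr)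

lemma rel1 : (X : P) * Y * X⁻¹ * Y = 1 := by
  have := mk_rel (k := k)
    (FreeGroup.of 0 * FreeGroup.of 1 * (FreeGroup.of 0)⁻¹ * FreeGroup.of 1)
    (Set.mem_insert _ _)
  simpa only [map_mul, map_inv, X, Y, PresentedGroup.of] using this

lemma rel2 : (X : P) ^ 2 * Y ^ (-(k : ℤ)) = 1 := by
  have := mk_rel (k := k) (FreeGroup.of 0 ^ 2 * FreeGroup.of 1 ^ (-(k : ℤ)))
    (Set.mem_insert_iff.2 (Or.inr rfl))
  simpa only [map_mul, map_pow, map_zpow, X, Y, PresentedGroup.of] using this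

lemma conjY : (X : P) * Y * X⁻¹ = Y⁻¹ :=
  mul_eq_one_iff_eq_inv.1 rel1

lemma conj_zpow' (m : ℤ) : (X : P) * Y ^ m * X⁻¹ = Y ^ (-m) := by
  rw [← conj_zpow, conjY, inv_zpow, zpow_neg]

lemma X_mul_Ypow (m : ℤ) : (X : P) * Y ^ m = Y ^ (-m) * X := by
  rw [← conj_zpow' m]; group

lemma Ypow_mul_X (m : ℤ) : (Y : P) ^ m * X = X * Y ^ (-m) := by
  rw [X_mul_Ypow, neg_neg]

lemma X_sq : (X : P) ^ 2 = Y ^ (k : ℤ) := by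
  have h := rel2 (k := k)
  rw [mul_eq_one_iff_eq_inv] at h
  rw [h, ← zpow_neg, neg_neg]

lemma X_sq' : (X : P) ^ 2 = Y ^ (-(k : ℤ)) := by
  have h := X_mul_Ypow (k := k) (k : ℤ)
  rw [← X_sq, ← pow_succ'] at h
  rw [pow_succ] at h
  have h2 : (X : P) ^ 2 = (X : P) ^ 2 := rfl
  exact mul_right_cancel h

lemma Y_pow_2k : (Y : P) ^ ((2 * k : ℕ) : ℤ) = 1 := by
  have : ((2 * k : ℕ) : ℤ) = (k : ℤ) + (k : ℤ) := by push_cast; ring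
  rw [this, zpow_add]
  nth_rewrite 1 [← X_sq]
  rw [X_sq', ← zpow_add]
  simp

variable [NeZero k]

lemma Ypow_congr (m : ℤ) (i : ZMod (2 * k)) (h : (m : ZMod (2 * k)) = i) :
    (Y : P) ^ m = Y ^ (i.val : ℤ) := by
  have hd : ((2 * k : ℕ) : ℤ) ∣ m - (i.val : ℤ) := by
    rwa [← ZMod.intCast_zmod_eq_zero_iff_dvd, Int.cast_sub, Int.cast_natCast,
      ZMod.natCast_val, ZMod.cast_id, sub_eq_zero]
  obtain ⟨c, hc⟩ := hd
  have hm : m = (i.val : ℤ) + (2 * k : ℕ) * c := by linarith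
  rw [hm, zpow_add, zpow_mul, Y_pow_2k, one_zpow, mul_one]

variable (k)

/-- the inverse map -/
noncomputable def g : QuaternionGroup k → PresentedGroup (quaternionRels k)
  | a i => Y ^ (i.val : ℤ)
  | xa i => X * Y ^ (i.val : ℤ)

lemma g_mul (p q : QuaternionGroup k) : g k (p * q) = g k p * g k q := by
  have hcast : ∀ i : ZMod (2 * k), ((i.val : ℤ) : ZMod (2 * k)) = i := by
    intro i
    rw [Int.cast_natCast, ZMod.natCast_val, ZMod.cast_id]
  rcases p with i | i <;> rcases q with j | j <;>
    simp only [g, a_mul_a, a_mul_xa, xa_mul_a, xa_mul_xa]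
  · rw [← zpow_add, Ypow_congr (i.val + j.val) (i + j) (by push_cast [hcast]; ring)]
  · rw [← mul_assoc, Ypow_mul_X, mul_assoc, ← zpow_add,
      Ypow_congr (-(i.val : ℤ) + (j.val : ℤ)) (j - i) (by push_cast [hcast]; ring)]
  · rw [mul_assoc, ← zpow_add,
      Ypow_congr ((i.val : ℤ) + (j.val : ℤ)) (i + j) (by push_cast [hcast]; ring)]
  · rw [mul_assoc, ← mul_assoc ((Y : P) ^ (i.val : ℤ)), Ypow_mul_X, ← mul_assoc, ← mul_assoc,
      ← pow_two, X_sq, ← zpow_add, ← zpow_add,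
      Ypow_congr ((k : ℤ) + -(i.val : ℤ) + (j.val : ℤ)) ((k : ZMod (2 * k)) + j - i)
        (by push_cast [hcast]; ring)]

/-- the inverse homomorphism -/
noncomputable def ψ : QuaternionGroup k →* PresentedGroup (quaternionRels k) :=
  MonoidHom.mk' (g k) (g_mul k)

end Pside

variable [NeZero k]

lemma hφX : φ k (X : PresentedGroup (quaternionRels k)) = xa 0 := by
  simpa [X, φ, f] using PresentedGroup.toGroup.of (rels_hold k) (x := 0)

lemma hφY : φ k (Y : PresentedGroup (quaternionRels k)) = a 1 := by
  simpa [Y, φ, f] using PresentedGroup.toGroup.of (rels_hold k) (x := 1)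

lemma hψxa0 : ψ k (xa 0) = (X : PresentedGroup (quaternionRels k)) := by
  show (X : PresentedGroup (quaternionRels k)) * Y ^ (((0 : ZMod (2 * k)).val : ℤ)) = X
  rw [ZMod.val_zero]
  simp

lemma hψa1 (hk : 1 ≤ k) : ψ k (a 1) = (Y : PresentedGroup (quaternionRels k)) := by
  haveI : Fact (1 < 2 * k) := ⟨by omega⟩
  show (Y : PresentedGroup (quaternionRels k)) ^ (((1 : ZMod (2 * k)).val : ℤ)) = Y
  rw [ZMod.val_one]
  simp

lemma left_inv (hk : 1 ≤ k) (p : PresentedGroup (quaternionRels k)) : ψ k (φ k p) = p := by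
  have key : (ψ k).comp (φ k) = MonoidHom.id _ := by
    apply PresentedGroup.ext
    intro i
    fin_cases i
    · show ψ k (φ k (X : PresentedGroup (quaternionRels k))) = X
      rw [hφX, hψxa0]
    · show ψ k (φ k (Y : PresentedGroup (quaternionRels k))) = Y
      rw [hφY, hψa1 k hk]
  calc ψ k (φ k p) = ((ψ k).comp (φ k)) p := rfl
    _ = p := by rw [key]; rfl

lemma right_inv (q : QuaternionGroup k) : φ k (ψ k q) = q := by
  have hYpow : ∀ i : ZMod (2 * k), φ k ((Y : PresentedGroup (quaternionRels k)) ^ (i.val : ℤ))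
      = a i := by
    intro i
    rw [map_zpow, hφY, zpow_natCast, a_one_pow, ZMod.natCast_val, ZMod.cast_id]
  rcases q with i | i
  · exact hYpow i
  · show φ k ((X : PresentedGroup (quaternionRels k)) * Y ^ (i.val : ℤ)) = _
    rw [map_mul, hφX, hYpow i, xa_mul_a, zero_add]

end QuatAux

theorem presented_quaternion_card (k : ℕ) (hk : 1 ≤ k) :
    Nat.card (PresentedGroup (quaternionRels k)) = 4 * k := by
  haveI : NeZero k := ⟨by omega⟩
  have e : PresentedGroup (quaternionRels k) ≃ QuaternionGroup k :=
    { toFun := QuatAux.φ k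
      invFun := QuatAux.ψ k
      left_inv := QuatAux.left_inv k hk
      right_inv := QuatAux.right_inv k }
  rw [Nat.card_congr e, Nat.card_eq_fintype_card, QuaternionGroup.card]
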